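/- For every N ≥ 2, T > 0, ε > 0 and c ≥ 0, there exists exactly one solution of the N-periodic Riccati system on [0,T]: that is, there exists a unique family (φ^i)_{i=0,…,N−1} of differentiable functions [0,T] → ℝ such that, extending it N-periodically in the index i, (d/dt)φ^i(t) = Σ_{j=0}^{N−1} φ^j(t) φ^{N+i−j}(t) − ε^i holds for all i ∈ {0,…,N−1} and all t ∈ [0,T], with terminal conditions φ^0(T) = c, φ^1(T) = −c, φ^i(T) = 0 for 2 ≤ i ≤ N−1, where ε^0 = ε, ε^1 = −ε, ε^i = 0 for 2 ≤ i ≤ N−1. -/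

import Mathlib

open scoped BigOperators

/-- The sequence ε^i with integer index. -/
noncomputable def epsZ (ε : ℝ) : ℤ → ℝ := fun i => if i = 0 then ε else if i = 1 then -ε else 0

/-- `φ` is a solution of the `N`-periodic Riccati system on `[0,T]`. -/
def IsPerRiccatiSol (T ε c : ℝ) (N : ℕ) (φ : ℤ → ℝ → ℝ) : Prop :=
  (∀ i : ℤ, φ (i + (N : ℤ)) = φ i) ∧
  (∀ i : ℕ, i < N → ∀ t ∈ Set.Icc (0:ℝ) T,
    HasDerivWithinAt (φ (i : ℤ))
      ((∑ j ∈ Finset.range N, φ (j : ℤ) t * φ ((N : ℤ) + (i : ℤ) - (j : ℤ)) t) - epsZ ε (i : ℤ))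
      (Set.Icc (0:ℝ) T) t) ∧
  φ 0 T = c ∧ φ 1 T = -c ∧ ∀ i : ℕ, 2 ≤ i → i < N → φ (i : ℤ) T = 0

/-- The discrete Fourier transform of `(φ^j)_{j=0,…,N-1}` at frequency `k`:
`\hatφ^k(t) := ∑_{j=0}^{N-1} φ^j(t) exp(−2π√(−1) jk/N)`. -/
noncomputable def dft (N : ℕ) (φ : ℤ → ℝ → ℝ) (k : ℕ) (t : ℝ) : ℂ :=
  ∑ j ∈ Finset.range N,
    (φ (j : ℤ) t : ℂ) * Complex.exp (-(2 * Real.pi * Complex.I * (j : ℂ) * (k : ℂ)) / (N : ℂ))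

namespace PerRiccati

open Complex Finset

/-! ### The `N`-th root of unity and geometric sums -/

noncomputable def zeta (N : ℕ) : ℂ := Complex.exp (2 * Real.pi * Complex.I / N)

lemma zeta_zpow (N : ℕ) (m : ℤ) :
    zeta N ^ m = Complex.exp (m * (2 * Real.pi * Complex.I / N)) := by
  rw [zeta, ← Complex.exp_int_mul]

lemma zeta_ne_zero (N : ℕ) : zeta N ≠ 0 := Complex.exp_ne_zero _

lemma zeta_pow_N {N : ℕ} (hN : 0 < N) : zeta N ^ (N : ℤ) = 1 := by
  rw [zeta_zpow]
  have hNc : (N : ℂ) ≠ 0 := Nat.cast_ne_zero.2 hN.ne'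
  rw [show ((N : ℤ) : ℂ) * (2 * Real.pi * Complex.I / N) = 2 * Real.pi * Complex.I by
    push_cast; field_simp]
  exact Complex.exp_two_pi_mul_I

lemma zeta_eq_one_iff {N : ℕ} (hN : 0 < N) (m : ℤ) :
    zeta N ^ m = 1 ↔ (N : ℤ) ∣ m := by
  rw [zeta_zpow, Complex.exp_eq_one_iff]
  have hNc : (N : ℂ) ≠ 0 := Nat.cast_ne_zero.2 hN.ne'
  have hI : (2 : ℂ) * Real.pi * Complex.I ≠ 0 := by
    simp [Complex.I_ne_zero, Real.pi_ne_zero, Complex.ofReal_ne_zero]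
  constructor
  · rintro ⟨n, hn⟩
    refine ⟨n, ?_⟩
    have h2 : (m : ℂ) * (2 * Real.pi * Complex.I) = (N * n : ℤ) * (2 * Real.pi * Complex.I) := by
      have h4 := congrArg (fun z => z * (N : ℂ)) hn
      field_simp at h4
      push_cast
      linear_combination (2 * Real.pi * Complex.I) * h4
    have h3 : (m : ℂ) = ((N * n : ℤ) : ℂ) := mul_right_cancel₀ hI h2
    exact_mod_cast h3
  · rintro ⟨n, rfl⟩
    exact ⟨n, by push_cast; field_simp⟩

lemma geom_zeta {N : ℕ} (hN : 0 < N) (m : ℤ) :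
    ∑ j ∈ Finset.range N, zeta N ^ (m * j) = if (N : ℤ) ∣ m then (N : ℂ) else 0 := by
  have hterm : ∀ j : ℕ, zeta N ^ (m * j) = (zeta N ^ m) ^ j := by
    intro j
    rw [zpow_mul, zpow_natCast]
  simp only [hterm]
  by_cases h : (N : ℤ) ∣ m
  · rw [if_pos h, (zeta_eq_one_iff hN m).2 h]
    simp
  · rw [if_neg h]
    have hne : zeta N ^ m ≠ 1 := fun hh => h ((zeta_eq_one_iff hN m).1 hh)
    rw [geom_sum_eq hne]
    have : (zeta N ^ m) ^ N = 1 := by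
      rw [← zpow_natCast, ← zpow_mul, mul_comm, zpow_mul, zeta_pow_N hN, one_zpow]
    rw [this]
    simp

lemma not_dvd_of_lt {N : ℕ} (i : ℤ) (h0 : i ≠ 0) (hlow : -(N:ℤ) < i) (hhigh : i < N) :
    ¬ (N:ℤ) ∣ i := by
  intro hdvd
  apply h0
  apply Int.eq_zero_of_abs_lt_dvd hdvd
  rw [abs_lt]
  exact ⟨hlow, hhigh⟩

/-! ### The square root `r_k` of the Fourier coefficients of ε -/

noncomputable def rho (ε : ℝ) (N k : ℕ) : ℝ := Real.sqrt (2 * ε * Real.sin (Real.pi * k / N))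

noncomputable def alp (N k : ℕ) : ℝ := Real.pi / 4 - Real.pi * k / (2 * N)

noncomputable def rK (ε : ℝ) (N k : ℕ) : ℂ :=
  (rho ε N k : ℂ) * Complex.exp ((alp N k : ℝ) * Complex.I)

lemma rho_sq {ε : ℝ} (hε : 0 ≤ ε) {N k : ℕ} (hN : 0 < N) (hk : k ≤ N) :
    (rho ε N k : ℝ) ^ 2 = 2 * ε * Real.sin (Real.pi * k / N) := by
  apply Real.sq_sqrt
  apply mul_nonneg (by linarith)
  apply Real.sin_nonneg_of_nonneg_of_le_pi
  · positivity
  · rw [div_le_iff₀ (by positivity)]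
    have hkN : (k : ℝ) ≤ N := Nat.cast_le.2 hk
    nlinarith [Real.pi_pos]

lemma rK_sq {ε : ℝ} (hε : 0 ≤ ε) {N k : ℕ} (hN : 0 < N) (hk : k ≤ N) :
    (rK ε N k) ^ 2 = (ε : ℂ) * (1 - zeta N ^ (-(k : ℤ))) := by
  have hNc : (N : ℂ) ≠ 0 := Nat.cast_ne_zero.2 hN.ne'
  set θ : ℝ := Real.pi * k / N with hθ
  have hz : zeta N ^ (-(k : ℤ)) = Complex.exp ((-θ : ℝ) * Complex.I) *
      Complex.exp ((-θ : ℝ) * Complex.I) := by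
    rw [zeta, ← Complex.exp_int_mul, ← Complex.exp_add]
    congr 1
    push_cast [hθ]
    field_simp
    ring
  rw [rK, hz, mul_pow, ← Complex.exp_nat_mul]
  have h1 : ((rho ε N k : ℂ)) ^ 2 = ((2 * ε * Real.sin θ : ℝ) : ℂ) := by
    rw [← Complex.ofReal_pow, rho_sq hε hN hk]
  rw [h1]
  have h2 : ((2:ℕ):ℂ) * ((alp N k : ℝ) * Complex.I) = ((Real.pi/2 - θ : ℝ) : ℂ) * Complex.I := by
    rw [alp]
    push_cast [hθ]
    field_simp
    ring
  rw [h2]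
  set u := Complex.exp ((θ : ℝ) * Complex.I) with hu
  have hune : u ≠ 0 := Complex.exp_ne_zero _
  have hexpneg : Complex.exp ((-θ : ℝ) * Complex.I) = u⁻¹ := by
    rw [hu, ← Complex.exp_neg]
    congr 1
    push_cast
    ring
  have hexp2 : Complex.exp (((Real.pi/2 - θ : ℝ)) * Complex.I)
      = Complex.I * u⁻¹ := by
    rw [show ((Real.pi/2 - θ : ℝ) : ℂ) * Complex.I
        = ((Real.pi/2 : ℝ) : ℂ) * Complex.I + ((-θ : ℝ) : ℂ) * Complex.I by push_cast; ring]
    rw [Complex.exp_add, hexpneg]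
    congr 1
    rw [Complex.exp_mul_I]
    push_cast
    simp
  rw [hexp2, hexpneg]
  have hsinI : ((Real.sin θ : ℝ) : ℂ) * Complex.I = (u - u⁻¹) / 2 := by
    rw [Complex.ofReal_sin, ← Complex.sinh_mul_I, Complex.sinh, hu, ← Complex.exp_neg]
  have goal' : ((2 * ε * Real.sin θ : ℝ) : ℂ) * (Complex.I * u⁻¹)
      = (2 * ε : ℂ) * (((Real.sin θ : ℝ) : ℂ) * Complex.I) * u⁻¹ := by push_cast; ring
  rw [goal', hsinI]
  field_simp

lemma conj_rK (ε : ℝ) {N k : ℕ} (hN : 0 < N) (hk : k ≤ N) :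
    (starRingEnd ℂ) (rK ε N k) = rK ε N (N - k) := by
  have hNc : (N : ℝ) ≠ 0 := Nat.cast_ne_zero.2 hN.ne'
  have hcast : ((N - k : ℕ) : ℝ) = (N : ℝ) - k := by
    push_cast [Nat.cast_sub hk]; ring
  have hrho : rho ε N (N - k) = rho ε N k := by
    rw [rho, rho]
    congr 1
    rw [hcast]
    rw [show Real.pi * ((N:ℝ) - k) / N = Real.pi - Real.pi * k / N by field_simp]
    rw [Real.sin_pi_sub]
  have halp : (alp N (N - k) : ℝ) = -(alp N k) := by
    rw [alp, alp, hcast]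
    field_simp
    ring
  rw [rK, rK, hrho, halp, map_mul]
  congr 1
  · simp
  · rw [← Complex.exp_conj]
    congr 1
    simp [Complex.conj_ofReal]

/-! ### The functions P, Q, ψ -/

noncomputable def QK (T ε c : ℝ) (N k : ℕ) (t : ℝ) : ℂ :=
  Complex.cosh (rK ε N k * ((T - t : ℝ) : ℂ)) +
    ((c / ε : ℝ) : ℂ) * rK ε N k * Complex.sinh (rK ε N k * ((T - t : ℝ) : ℂ))

noncomputable def PK (T ε c : ℝ) (N k : ℕ) (t : ℝ) : ℂ :=
  ((c / ε : ℝ) : ℂ) * (rK ε N k) ^ 2 * Complex.cosh (rK ε N k * ((T - t : ℝ) : ℂ)) +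
    rK ε N k * Complex.sinh (rK ε N k * ((T - t : ℝ) : ℂ))

noncomputable def psiK (T ε c : ℝ) (N k : ℕ) (t : ℝ) : ℂ :=
  PK T ε c N k t / QK T ε c N k t

lemma conj_psiK (T ε c : ℝ) {N k : ℕ} (hN : 0 < N) (hk : k ≤ N) (t : ℝ) :
    (starRingEnd ℂ) (psiK T ε c N k t) = psiK T ε c N (N - k) t := by
  have h1 := conj_rK ε hN hk
  rw [psiK, psiK, QK, QK, PK, PK]
  simp only [map_div₀, map_add, map_mul, map_pow, ← Complex.cosh_conj, ← Complex.sinh_conj,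
    h1, Complex.conj_ofReal]

lemma rK_zero (T ε c : ℝ) (N : ℕ) : rK ε N 0 = 0 := by
  rw [rK, rho]
  simp

lemma psiK_zero (T ε c : ℝ) (N : ℕ) (t : ℝ) : psiK T ε c N 0 t = 0 := by
  rw [psiK, PK, rK_zero T ε c N]
  simp

/-- real part of cosh z * conj (sinh z). -/
lemma re_cosh_mul_conj_sinh (z : ℂ) :
    (Complex.cosh z * (starRingEnd ℂ) (Complex.sinh z)).re
      = Real.sinh z.re * Real.cosh z.re := by
  rw [← Complex.sinh_conj]
  have h : Complex.cosh z * Complex.sinh ((starRingEnd ℂ) z)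
      = (Complex.sinh (z + (starRingEnd ℂ) z) - Complex.sinh (z - (starRingEnd ℂ) z)) / 2 := by
    rw [Complex.sinh_add, Complex.sinh_sub]
    ring
  rw [h, Complex.add_conj, Complex.sub_conj, Complex.sinh_mul_I,
    ← Complex.ofReal_sinh, ← Complex.ofReal_sin]
  rw [show (((Real.sinh (2*z.re) : ℝ) : ℂ) - ((Real.sin (2*z.im) : ℝ) : ℂ) * Complex.I) / 2
      = ((Real.sinh (2*z.re)/2 : ℝ) : ℂ) + ((-(Real.sin (2*z.im))/2 : ℝ) : ℂ) * Complex.I by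
    push_cast; ring]
  simp only [Complex.add_re, Complex.ofReal_re, Complex.mul_I_re, Complex.ofReal_im, neg_zero,
    add_zero]
  rw [Real.sinh_two_mul]
  ring

lemma cos_alp_pos {N k : ℕ} (hN : 0 < N) (hk : k < N) : 0 < Real.cos (alp N k) := by
  apply Real.cos_pos_of_mem_Ioo
  constructor
  · rw [alp]
    have h1 : (k : ℝ) < N := Nat.cast_lt.2 hk
    have h2 : (0:ℝ) < N := Nat.cast_pos.2 hN
    have h3 : Real.pi * k / (2 * N) < Real.pi / 2 := by
      rw [div_lt_iff₀ (by positivity)]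
      nlinarith [Real.pi_pos]
    linarith [Real.pi_pos]
  · rw [alp]
    have : 0 ≤ Real.pi * k / (2 * N) := by positivity
    nlinarith [Real.pi_pos]

lemma rK_re_nonneg {ε : ℝ} (hε : 0 ≤ ε) {N k : ℕ} (hN : 0 < N) (hk : k < N) :
    0 ≤ (rK ε N k).re := by
  rw [rK, Complex.re_ofReal_mul, Complex.exp_ofReal_mul_I_re]
  exact mul_nonneg (Real.sqrt_nonneg _) (cos_alp_pos hN hk).le

lemma QK_ne_zero {T ε c : ℝ} (hε : 0 < ε) (hc : 0 ≤ c) {N k : ℕ} (hN : 0 < N) (hk : k < N)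
    {t : ℝ} (ht : t ≤ T) : QK T ε c N k t ≠ 0 := by
  set r := rK ε N k with hr
  set z := r * ((T - t : ℝ) : ℂ) with hz
  have hzre : z.re = rho ε N k * (T - t) * Real.cos (alp N k) := by
    rw [hz, hr, rK]
    rw [show (rho ε N k : ℂ) * Complex.exp ((alp N k : ℝ) * Complex.I) * ((T - t : ℝ) : ℂ)
        = ((rho ε N k * (T - t) : ℝ) : ℂ) * Complex.exp ((alp N k : ℝ) * Complex.I) by
      push_cast; ring]
    rw [Complex.re_ofReal_mul, Complex.exp_ofReal_mul_I_re]
  by_cases hcase : rho ε N k * (T - t) = 0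
  · have hz0 : z = 0 := by
      rw [hz, hr, rK]
      rw [show (rho ε N k : ℂ) * Complex.exp ((alp N k : ℝ) * Complex.I) * ((T - t : ℝ) : ℂ)
          = ((rho ε N k * (T - t) : ℝ) : ℂ) * Complex.exp ((alp N k : ℝ) * Complex.I) by
        push_cast; ring]
      rw [hcase]
      simp
    rw [QK, ← hr, ← hz, hz0]
    simp
  · have hρ : 0 ≤ rho ε N k := Real.sqrt_nonneg _
    have hTt : 0 ≤ T - t := by linarith
    have hpos : 0 < rho ε N k * (T - t) :=
      lt_of_le_of_ne (mul_nonneg hρ hTt) (Ne.symm hcase)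
    have hzrepos : 0 < z.re := by
      rw [hzre]; exact mul_pos hpos (cos_alp_pos hN hk)
    intro hQ
    rw [QK, ← hr, ← hz] at hQ
    have hQ' : Complex.cosh z = -(((c / ε : ℝ) : ℂ) * r * Complex.sinh z) := by
      linear_combination hQ
    have h1 : (Complex.cosh z * (starRingEnd ℂ) (Complex.sinh z)).re
        = Real.sinh z.re * Real.cosh z.re := re_cosh_mul_conj_sinh z
    have h2 : (Complex.cosh z * (starRingEnd ℂ) (Complex.sinh z)).re
        = -((c / ε) * r.re * Complex.normSq (Complex.sinh z)) := by
      rw [hQ']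
      rw [show -(((c / ε : ℝ) : ℂ) * r * Complex.sinh z) * (starRingEnd ℂ) (Complex.sinh z)
          = -(((c / ε : ℝ) : ℂ) * r * (Complex.sinh z * (starRingEnd ℂ) (Complex.sinh z))) by ring]
      rw [Complex.mul_conj]
      simp [Complex.re_ofReal_mul]
    have h3 : 0 < Real.sinh z.re * Real.cosh z.re :=
      mul_pos (Real.sinh_pos_iff.2 hzrepos) (Real.cosh_pos _)
    have h4 : 0 ≤ (c / ε) * r.re * Complex.normSq (Complex.sinh z) := by
      apply mul_nonneg (mul_nonneg (div_nonneg hc hε.le) (rK_re_nonneg hε.le hN hk))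
      exact Complex.normSq_nonneg _
    rw [h1] at h2
    linarith

/-! ### Derivatives -/

lemma hasDerivAt_arg (r : ℂ) (T : ℝ) (t : ℝ) :
    HasDerivAt (fun t : ℝ => r * ((T - t : ℝ) : ℂ)) (-r) t := by
  have h1 : HasDerivAt (fun t : ℝ => ((t : ℝ) : ℂ)) 1 t := by
    simpa using (hasDerivAt_id t).ofReal_comp
  have h2 : HasDerivAt (fun t : ℝ => ((T - t : ℝ) : ℂ)) (-1) t := by
    simp only [Complex.ofReal_sub]
    exact ((hasDerivAt_const t ((T:ℝ):ℂ)).sub h1).congr_deriv (by simp)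
  simpa using h2.const_mul r

lemma hasDerivAt_QK (T ε c : ℝ) (N k : ℕ) (t : ℝ) :
    HasDerivAt (QK T ε c N k) (-(PK T ε c N k t)) t := by
  have harg := hasDerivAt_arg (rK ε N k) T t
  have hcosh : HasDerivAt (fun t : ℝ => Complex.cosh (rK ε N k * ((T - t : ℝ) : ℂ)))
      ((-(rK ε N k)) • Complex.sinh (rK ε N k * ((T - t : ℝ) : ℂ))) t :=
    HasDerivAt.scomp t (Complex.hasDerivAt_cosh _) harg
  have hsinh : HasDerivAt (fun t : ℝ => Complex.sinh (rK ε N k * ((T - t : ℝ) : ℂ)))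
      ((-(rK ε N k)) • Complex.cosh (rK ε N k * ((T - t : ℝ) : ℂ))) t :=
    HasDerivAt.scomp t (Complex.hasDerivAt_sinh _) harg
  have := hcosh.add (hsinh.const_mul (((c / ε : ℝ) : ℂ) * rK ε N k))
  refine this.congr_deriv ?_
  rw [PK]
  simp only [smul_eq_mul]
  ring

lemma hasDerivAt_PK (T ε c : ℝ) (N k : ℕ) (t : ℝ) :
    HasDerivAt (PK T ε c N k) (-(rK ε N k)^2 * QK T ε c N k t) t := by
  have harg := hasDerivAt_arg (rK ε N k) T t
  have hcosh : HasDerivAt (fun t : ℝ => Complex.cosh (rK ε N k * ((T - t : ℝ) : ℂ)))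
      ((-(rK ε N k)) • Complex.sinh (rK ε N k * ((T - t : ℝ) : ℂ))) t :=
    HasDerivAt.scomp t (Complex.hasDerivAt_cosh _) harg
  have hsinh : HasDerivAt (fun t : ℝ => Complex.sinh (rK ε N k * ((T - t : ℝ) : ℂ)))
      ((-(rK ε N k)) • Complex.cosh (rK ε N k * ((T - t : ℝ) : ℂ))) t :=
    HasDerivAt.scomp t (Complex.hasDerivAt_sinh _) harg
  have := (hcosh.const_mul (((c / ε : ℝ) : ℂ) * (rK ε N k)^2)).add (hsinh.const_mul (rK ε N k))
  refine this.congr_deriv ?_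
  rw [QK]
  simp only [smul_eq_mul]
  ring

lemma hasDerivAt_psiK (T ε c : ℝ) (N k : ℕ) (t : ℝ) (hQ : QK T ε c N k t ≠ 0) :
    HasDerivAt (psiK T ε c N k) ((psiK T ε c N k t)^2 - (rK ε N k)^2) t := by
  have h := (hasDerivAt_PK T ε c N k t).div (hasDerivAt_QK T ε c N k t) hQ
  simp only [psiK]
  refine h.congr_deriv ?_
  field_simp
  ring

lemma psiK_T (T ε c : ℝ) (N k : ℕ) :
    psiK T ε c N k T = ((c / ε : ℝ) : ℂ) * (rK ε N k) ^ 2 := by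
  rw [psiK, PK, QK]
  simp

/-! ### Sum identities -/

lemma conv_identity {N : ℕ} (hN : 0 < N) (f : ℕ → ℂ) (i : ℤ) :
    ∑ j ∈ Finset.range N, (((N:ℂ)⁻¹ * ∑ k ∈ Finset.range N, f k * zeta N ^ ((j:ℤ)*k)) *
      ((N:ℂ)⁻¹ * ∑ k ∈ Finset.range N, f k * zeta N ^ (((N:ℤ)+i-j)*k)))
    = (N:ℂ)⁻¹ * ∑ k ∈ Finset.range N, (f k)^2 * zeta N ^ (i*k) := by
  have hNc : (N : ℂ) ≠ 0 := Nat.cast_ne_zero.2 hN.ne'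
  have hζ := zeta_ne_zero N
  have step1 : ∀ j ∈ Finset.range N,
      (((N:ℂ)⁻¹ * ∑ k ∈ Finset.range N, f k * zeta N ^ ((j:ℤ)*k)) *
        ((N:ℂ)⁻¹ * ∑ k ∈ Finset.range N, f k * zeta N ^ (((N:ℤ)+i-j)*k)))
      = ∑ k ∈ Finset.range N, ∑ l ∈ Finset.range N,
          (N:ℂ)⁻¹ * (N:ℂ)⁻¹ * f k * f l * zeta N ^ (i*l) * zeta N ^ (((k:ℤ)-l)*j) := by
    intro j _
    rw [show (((N:ℂ)⁻¹ * ∑ k ∈ Finset.range N, f k * zeta N ^ ((j:ℤ)*k)) *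
        ((N:ℂ)⁻¹ * ∑ k ∈ Finset.range N, f k * zeta N ^ (((N:ℤ)+i-j)*k)))
      = (N:ℂ)⁻¹ * (N:ℂ)⁻¹ * ((∑ k ∈ Finset.range N, f k * zeta N ^ ((j:ℤ)*k)) *
        (∑ k ∈ Finset.range N, f k * zeta N ^ (((N:ℤ)+i-j)*k))) by ring]
    rw [Finset.sum_mul_sum]
    rw [Finset.mul_sum]
    refine Finset.sum_congr rfl fun k hk => ?_
    rw [Finset.mul_sum]
    refine Finset.sum_congr rfl fun l hl => ?_
    have hzp : zeta N ^ ((j:ℤ)*k) * zeta N ^ (((N:ℤ)+i-j)*l)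
        = zeta N ^ (i*l) * zeta N ^ (((k:ℤ)-l)*j) := by
      rw [← zpow_add₀ hζ, ← zpow_add₀ hζ]
      rw [show (j:ℤ)*k + ((N:ℤ)+i-j)*l = (i*l + ((k:ℤ)-l)*j) + (N:ℤ)*(l:ℤ) by ring]
      rw [zpow_add₀ hζ, zpow_mul, zeta_pow_N hN, one_zpow, mul_one]
    calc (N:ℂ)⁻¹ * (N:ℂ)⁻¹ * (f k * zeta N ^ ((j:ℤ)*k) * (f l * zeta N ^ (((N:ℤ)+i-j)*l)))
        = (N:ℂ)⁻¹ * (N:ℂ)⁻¹ * f k * f l *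
            (zeta N ^ ((j:ℤ)*k) * zeta N ^ (((N:ℤ)+i-j)*l)) := by ring
      _ = _ := by rw [hzp]; ring
  rw [Finset.sum_congr rfl step1]
  rw [Finset.sum_comm]
  have step2 : ∀ k ∈ Finset.range N,
      (∑ j ∈ Finset.range N, ∑ l ∈ Finset.range N,
        (N:ℂ)⁻¹ * (N:ℂ)⁻¹ * f k * f l * zeta N ^ (i*l) * zeta N ^ (((k:ℤ)-l)*j))
      = (N:ℂ)⁻¹ * (f k)^2 * zeta N ^ (i*k) := by
    intro k hk
    rw [Finset.sum_comm]
    have inner : ∀ l ∈ Finset.range N,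
        (∑ j ∈ Finset.range N,
          (N:ℂ)⁻¹ * (N:ℂ)⁻¹ * f k * f l * zeta N ^ (i*l) * zeta N ^ (((k:ℤ)-l)*j))
        = (N:ℂ)⁻¹ * (N:ℂ)⁻¹ * f k * f l * zeta N ^ (i*l) *
            (if (N:ℤ) ∣ ((k:ℤ)-l) then (N:ℂ) else 0) := by
      intro l _
      rw [← Finset.mul_sum, geom_zeta hN]
    rw [Finset.sum_congr rfl inner]
    rw [Finset.sum_eq_single k]
    · rw [if_pos (by simp)]
      field_simp
    · intro l hl hlk
      rw [if_neg, mul_zero]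
      intro hdvd
      have hk' : k < N := Finset.mem_range.1 hk
      have hl' : l < N := Finset.mem_range.1 hl
      have : (k:ℤ) - l = 0 := by
        apply Int.eq_zero_of_abs_lt_dvd hdvd
        rw [abs_lt]
        constructor <;> omega
      omega
    · intro hk'
      exact absurd hk hk'
  rw [Finset.sum_congr rfl step2, Finset.mul_sum]
  refine Finset.sum_congr rfl fun k hk => by ring

lemma eps_identity {N : ℕ} (hN : 2 ≤ N) (ε : ℝ) (i : ℕ) (hi : i < N) :
    (N:ℂ)⁻¹ * ∑ k ∈ Finset.range N, ((ε:ℂ) * (1 - zeta N ^ (-(k:ℤ)))) * zeta N ^ ((i:ℤ)*k)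
      = ((epsZ ε i : ℝ) : ℂ) := by
  have hN0 : 0 < N := by omega
  have hNc : (N : ℂ) ≠ 0 := Nat.cast_ne_zero.2 hN0.ne'
  have hζ := zeta_ne_zero N
  have hterm : ∀ k : ℕ, ((ε:ℂ) * (1 - zeta N ^ (-(k:ℤ)))) * zeta N ^ ((i:ℤ)*k)
      = (ε:ℂ) * zeta N ^ ((i:ℤ)*k) - (ε:ℂ) * zeta N ^ (((i:ℤ)-1)*k) := by
    intro k
    have h : zeta N ^ (-(k:ℤ)) * zeta N ^ ((i:ℤ)*k) = zeta N ^ (((i:ℤ)-1)*k) := by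
      rw [← zpow_add₀ hζ]
      congr 1
      ring
    linear_combination (-(ε:ℂ)) * h
  simp only [hterm]
  rw [Finset.sum_sub_distrib, ← Finset.mul_sum, ← Finset.mul_sum, geom_zeta hN0, geom_zeta hN0]
  by_cases h0 : i = 0
  · subst h0
    rw [if_pos (by simp), if_neg (not_dvd_of_lt _ (by norm_num) (by omega) (by omega))]
    rw [epsZ]
    norm_num
    field_simp
  · by_cases h1 : i = 1
    · subst h1
      rw [if_neg (not_dvd_of_lt _ (by norm_num) (by omega) (by omega)), if_pos (by norm_num)]
      rw [epsZ]
      norm_num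
      field_simp
    · rw [if_neg (not_dvd_of_lt _ (by omega) (by omega) (by omega)),
        if_neg (not_dvd_of_lt _ (by omega) (by omega) (by omega))]
      rw [epsZ]
      have h2 : ((i:ℤ) ≠ 0) ∧ ((i:ℤ) ≠ 1) := by omega
      rw [if_neg h2.1, if_neg h2.2]
      simp

lemma real_sum {N : ℕ} (hN : 0 < N) (g : ℕ → ℂ)
    (hg : ∀ k, k ≤ N → (starRingEnd ℂ) (g k) = g (N - k)) (hg0 : g 0 = 0) (i : ℤ) :
    (starRingEnd ℂ) ((N:ℂ)⁻¹ * ∑ k ∈ Finset.range N, g k * zeta N ^ (i*k))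
      = (N:ℂ)⁻¹ * ∑ k ∈ Finset.range N, g k * zeta N ^ (i*k) := by
  have hζ := zeta_ne_zero N
  have hgN : g N = 0 := by
    have h := hg 0 (by omega)
    rw [hg0] at h
    simp at h
    exact h.symm
  have hcz : (starRingEnd ℂ) (zeta N) = (zeta N)⁻¹ := by
    rw [zeta, ← Complex.exp_conj, ← Complex.exp_neg]
    congr 1
    rw [map_div₀]
    simp [Complex.conj_I, map_ofNat]
    ring
  have hzN : ∀ m : ℤ, zeta N ^ ((m * N : ℤ)) = 1 := by
    intro m
    rw [mul_comm, zpow_mul, zeta_pow_N hN, one_zpow]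
  rw [map_mul, map_inv₀, Complex.conj_natCast]
  congr 1
  rw [map_sum]
  have hconjterm : ∀ k ∈ Finset.range N,
      (starRingEnd ℂ) (g k * zeta N ^ (i*k)) = g (N-k) * zeta N ^ (-(i*(k:ℤ))) := by
    intro k hk
    rw [map_mul, hg k (le_of_lt (Finset.mem_range.1 hk)), map_zpow₀, hcz, inv_zpow, ← zpow_neg]
  rw [Finset.sum_congr rfl hconjterm]
  rw [Finset.range_eq_Ico, Finset.sum_eq_sum_Ico_succ_bot hN, Finset.sum_eq_sum_Ico_succ_bot hN]
  rw [Nat.sub_zero, hgN, hg0, zero_mul, zero_mul]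
  simp only [zero_add]
  refine Finset.sum_nbij' (fun k => N - k) (fun k => N - k) ?_ ?_ ?_ ?_ ?_
  · intro a ha
    simp only [Finset.mem_Ico] at *
    omega
  · intro a ha
    simp only [Finset.mem_Ico] at *
    omega
  · intro a ha
    simp only [Finset.mem_Ico] at ha
    omega
  · intro a ha
    simp only [Finset.mem_Ico] at ha
    omega
  · intro a ha
    simp only [Finset.mem_Ico] at ha
    have hcast : ((N - a : ℕ) : ℤ) = (N : ℤ) - a := by
      push_cast [Nat.cast_sub (by omega : a ≤ N)]
      ring
    rw [hcast]
    rw [show i * ((N:ℤ) - a) = (-(i * a)) + i * N by ring, zpow_add₀ hζ, hzN i, mul_one]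

/-! ### The solution -/

noncomputable def PhiC (T ε c : ℝ) (N : ℕ) (i : ℤ) (t : ℝ) : ℂ :=
  (N:ℂ)⁻¹ * ∑ k ∈ Finset.range N, psiK T ε c N k t * zeta N ^ (i * k)

noncomputable def phiSol (T ε c : ℝ) (N : ℕ) (i : ℤ) (t : ℝ) : ℝ := (PhiC T ε c N i t).re

lemma PhiC_eq_ofReal (T ε c : ℝ) {N : ℕ} (hN : 0 < N) (i : ℤ) (t : ℝ) :
    PhiC T ε c N i t = ((phiSol T ε c N i t : ℝ) : ℂ) := by
  have hre := real_sum hN (fun k => psiK T ε c N k t)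
    (fun k hk => conj_psiK T ε c hN hk t) (psiK_zero T ε c N t) i
  rw [phiSol]
  exact (Complex.conj_eq_iff_re.1 hre).symm

lemma PhiC_periodic (T ε c : ℝ) {N : ℕ} (hN : 0 < N) (i : ℤ) (t : ℝ) :
    PhiC T ε c N (i + N) t = PhiC T ε c N i t := by
  rw [PhiC, PhiC]
  congr 1
  refine Finset.sum_congr rfl fun k hk => ?_
  congr 1
  rw [show (i + (N:ℤ)) * k = i * k + (N : ℤ) * k by ring, zpow_add₀ (zeta_ne_zero N),
    zpow_mul (zeta N) (N:ℤ) (k:ℤ), zeta_pow_N hN, one_zpow, mul_one]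

lemma phiSol_periodic (T ε c : ℝ) {N : ℕ} (hN : 0 < N) (i : ℤ) :
    phiSol T ε c N (i + N) = phiSol T ε c N i := by
  funext t
  rw [phiSol, phiSol, PhiC_periodic T ε c hN i t]

lemma phiSol_T {T ε c : ℝ} (hε : 0 < ε) {N : ℕ} (hN : 2 ≤ N) (i : ℕ) (hi : i < N) :
    phiSol T ε c N (i : ℤ) T = (c / ε) * epsZ ε i := by
  have hN0 : 0 < N := by omega
  have h1 : PhiC T ε c N (i : ℤ) T = ((c/ε : ℝ) : ℂ) * ((epsZ ε i : ℝ) : ℂ) := by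
    rw [PhiC]
    have hterm : ∀ k ∈ Finset.range N, psiK T ε c N k T * zeta N ^ ((i:ℤ) * k)
        = ((c/ε : ℝ) : ℂ) * (((ε:ℂ) * (1 - zeta N ^ (-(k:ℤ)))) * zeta N ^ ((i:ℤ)*k)) := by
      intro k hk
      rw [psiK_T, rK_sq hε.le hN0 (le_of_lt (Finset.mem_range.1 hk))]
      ring
    rw [Finset.sum_congr rfl hterm, ← Finset.mul_sum]
    rw [show (N:ℂ)⁻¹ * (((c/ε : ℝ) : ℂ) * ∑ k ∈ Finset.range N,
        ((ε:ℂ) * (1 - zeta N ^ (-(k:ℤ)))) * zeta N ^ ((i:ℤ)*k))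
      = ((c/ε : ℝ) : ℂ) * ((N:ℂ)⁻¹ * ∑ k ∈ Finset.range N,
        ((ε:ℂ) * (1 - zeta N ^ (-(k:ℤ)))) * zeta N ^ ((i:ℤ)*k)) by ring]
    rw [eps_identity hN ε i hi]
  rw [phiSol, h1, ← Complex.ofReal_mul, Complex.ofReal_re]

lemma hasDerivAt_phiSol {T ε c : ℝ} (hε : 0 < ε) (hc : 0 ≤ c) {N : ℕ} (hN : 2 ≤ N)
    (i : ℕ) (hi : i < N) {t : ℝ} (ht : t ≤ T) :
    HasDerivAt (phiSol T ε c N (i : ℤ))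
      ((∑ j ∈ Finset.range N,
          phiSol T ε c N (j : ℤ) t * phiSol T ε c N ((N:ℤ) + (i:ℤ) - (j:ℤ)) t) - epsZ ε i) t := by
  have hN0 : 0 < N := by omega
  -- derivative of PhiC
  have hD : HasDerivAt (PhiC T ε c N (i : ℤ))
      ((N:ℂ)⁻¹ * ∑ k ∈ Finset.range N,
        ((psiK T ε c N k t)^2 - (rK ε N k)^2) * zeta N ^ ((i:ℤ) * k)) t := by
    have hsum : HasDerivAt (fun s => ∑ k ∈ Finset.range N, psiK T ε c N k s * zeta N ^ ((i:ℤ) * k))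
        (∑ k ∈ Finset.range N,
          ((psiK T ε c N k t)^2 - (rK ε N k)^2) * zeta N ^ ((i:ℤ) * k)) t := by
      apply HasDerivAt.fun_sum
      intro k hk
      exact (hasDerivAt_psiK T ε c N k t
        (QK_ne_zero hε hc hN0 (Finset.mem_range.1 hk) ht)).mul_const _
    exact hsum.const_mul ((N:ℂ)⁻¹)
  -- rewrite the derivative value
  have hval : (N:ℂ)⁻¹ * ∑ k ∈ Finset.range N,
        ((psiK T ε c N k t)^2 - (rK ε N k)^2) * zeta N ^ ((i:ℤ) * k)
      = (((∑ j ∈ Finset.range N,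
          phiSol T ε c N (j : ℤ) t * phiSol T ε c N ((N:ℤ) + (i:ℤ) - (j:ℤ)) t) - epsZ ε i : ℝ) : ℂ) := by
    have hsplit : ∀ k ∈ Finset.range N,
        ((psiK T ε c N k t)^2 - (rK ε N k)^2) * zeta N ^ ((i:ℤ) * k)
        = (psiK T ε c N k t)^2 * zeta N ^ ((i:ℤ) * k)
          - ((ε:ℂ) * (1 - zeta N ^ (-(k:ℤ)))) * zeta N ^ ((i:ℤ)*k) := by
      intro k hk
      rw [rK_sq hε.le hN0 (le_of_lt (Finset.mem_range.1 hk))]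
      ring
    rw [Finset.sum_congr rfl hsplit, Finset.sum_sub_distrib, mul_sub]
    rw [eps_identity hN ε i hi]
    rw [← conv_identity hN0 (fun k => psiK T ε c N k t) (i:ℤ)]
    have hj : ∀ j ∈ Finset.range N,
        (((N:ℂ)⁻¹ * ∑ k ∈ Finset.range N, psiK T ε c N k t * zeta N ^ ((j:ℤ)*k)) *
          ((N:ℂ)⁻¹ * ∑ k ∈ Finset.range N, psiK T ε c N k t * zeta N ^ (((N:ℤ)+(i:ℤ)-j)*k)))
        = ((phiSol T ε c N (j : ℤ) t * phiSol T ε c N ((N:ℤ) + (i:ℤ) - (j:ℤ)) t : ℝ) : ℂ) := by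
      intro j hj
      rw [show ((N:ℂ)⁻¹ * ∑ k ∈ Finset.range N, psiK T ε c N k t * zeta N ^ ((j:ℤ)*k))
          = PhiC T ε c N (j : ℤ) t from rfl]
      rw [show ((N:ℂ)⁻¹ * ∑ k ∈ Finset.range N, psiK T ε c N k t * zeta N ^ (((N:ℤ)+(i:ℤ)-j)*k))
          = PhiC T ε c N ((N:ℤ)+(i:ℤ)-(j:ℤ)) t from rfl]
      rw [PhiC_eq_ofReal T ε c hN0, PhiC_eq_ofReal T ε c hN0, ← Complex.ofReal_mul]
    rw [Finset.sum_congr rfl hj, ← Complex.ofReal_sum, ← Complex.ofReal_sub]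
  rw [hval] at hD
  -- take real parts
  have hre : HasDerivAt (fun s => (PhiC T ε c N (i:ℤ) s).re)
      ((((∑ j ∈ Finset.range N,
          phiSol T ε c N (j : ℤ) t * phiSol T ε c N ((N:ℤ) + (i:ℤ) - (j:ℤ)) t) - epsZ ε i : ℝ) : ℂ)).re t :=
    (Complex.reCLM.hasFDerivAt.comp_hasDerivAt t hD)
  exact hre

/-! ### Periodic index lemma -/

lemma periodic_index {N : ℕ} (hN : 0 < N) (φ : ℤ → ℝ → ℝ)
    (hper : ∀ i : ℤ, φ (i + (N : ℤ)) = φ i) (m : ℕ) :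
    φ ((m : ℤ)) = φ (((m % N : ℕ) : ℤ)) := by
  have hq : ∀ q : ℕ, ∀ r : ℤ, φ (r + (N:ℤ) * q) = φ r := by
    intro q
    induction q with
    | zero => intro r; simp
    | succ n ih =>
      intro r
      rw [show ((n+1:ℕ):ℤ) = (n:ℤ)+1 by push_cast; ring,
        show r + (N:ℤ)*((n:ℤ)+1) = (r + (N:ℤ)*(n:ℤ)) + (N:ℤ) by ring, hper, ih]
  have hm : (m : ℤ) = ((m % N : ℕ) : ℤ) + (N:ℤ) * ((m / N : ℕ) : ℤ) := by
    push_cast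
    exact (Int.emod_add_mul_ediv (m:ℤ) (N:ℤ)).symm
  rw [hm, hq]

/-- The vector field of the Riccati system on `Fin N → ℝ`. -/
noncomputable def vecF (ε : ℝ) (N : ℕ) (hN : 0 < N) : (Fin N → ℝ) → (Fin N → ℝ) :=
  fun x i => (∑ j : Fin N, x j * x ⟨(N + i.1 - j.1) % N, Nat.mod_lt _ hN⟩) - epsZ ε i.1

lemma vecF_eval {ε : ℝ} {N : ℕ} (hN0 : 0 < N) (θ : ℤ → ℝ → ℝ)
    (hper : ∀ i : ℤ, θ (i + (N : ℤ)) = θ i) (i : Fin N) (t : ℝ) :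
    vecF ε N hN0 (fun j : Fin N => θ (j.1 : ℤ) t) i
      = (∑ j ∈ Finset.range N, θ (j : ℤ) t * θ ((N:ℤ) + (i.1:ℤ) - (j:ℤ)) t) - epsZ ε (i.1:ℤ) := by
  rw [vecF]
  congr 1
  rw [← Fin.sum_univ_eq_sum_range (fun j => θ (j:ℤ) t * θ ((N:ℤ) + (i.1:ℤ) - (j:ℤ)) t) N]
  refine Finset.sum_congr rfl fun j _ => ?_
  congr 1
  have h1 : ((N:ℤ) + (i.1:ℤ) - (j.1:ℤ)) = ((N + i.1 - j.1 : ℕ) : ℤ) := by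
    have := j.2
    push_cast
    omega
  rw [h1, periodic_index hN0 θ hper (N + i.1 - j.1)]

lemma vecF_lipschitz {ε : ℝ} {N : ℕ} (hN0 : 0 < N) {R : ℝ} (hR : 0 ≤ R) :
    LipschitzOnWith (Real.toNNReal (2*N*R)) (vecF ε N hN0)
      (Metric.closedBall (0 : Fin N → ℝ) R) := by
  apply LipschitzOnWith.of_dist_le_mul
  intro x hx y hy
  rw [Metric.mem_closedBall, dist_zero_right] at hx hy
  rw [dist_eq_norm, dist_eq_norm]
  have hcoe : ((Real.toNNReal (2*N*R)) : ℝ) = 2*N*R := Real.coe_toNNReal _ (by positivity)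
  rw [hcoe]
  have hbound : ∀ i : Fin N, ‖(vecF ε N hN0 x - vecF ε N hN0 y) i‖ ≤ 2*N*R*‖x - y‖ := by
    intro i
    have hxy : ∀ j : Fin N, ‖x j - y j‖ ≤ ‖x - y‖ := fun j => by
      simpa using norm_le_pi_norm (x - y) j
    have hxj : ∀ j : Fin N, ‖x j‖ ≤ R := fun j => le_trans (norm_le_pi_norm x j) hx
    have hyj : ∀ j : Fin N, ‖y j‖ ≤ R := fun j => le_trans (norm_le_pi_norm y j) hy
    have h1 : (vecF ε N hN0 x - vecF ε N hN0 y) i = ∑ j : Fin N,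
        (x j * x ⟨(N + i.1 - j.1) % N, Nat.mod_lt _ hN0⟩
          - y j * y ⟨(N + i.1 - j.1) % N, Nat.mod_lt _ hN0⟩) := by
      simp only [Pi.sub_apply, vecF]
      rw [sub_sub_sub_cancel_right, ← Finset.sum_sub_distrib]
    rw [h1]
    calc ‖∑ j : Fin N, (x j * x ⟨(N + i.1 - j.1) % N, Nat.mod_lt _ hN0⟩
          - y j * y ⟨(N + i.1 - j.1) % N, Nat.mod_lt _ hN0⟩)‖
        ≤ ∑ j : Fin N, ‖x j * x ⟨(N + i.1 - j.1) % N, Nat.mod_lt _ hN0⟩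
          - y j * y ⟨(N + i.1 - j.1) % N, Nat.mod_lt _ hN0⟩‖ := norm_sum_le _ _
      _ ≤ ∑ _j : Fin N, 2*R*‖x-y‖ := by
          apply Finset.sum_le_sum
          intro j _
          set a := x ⟨(N + i.1 - j.1) % N, Nat.mod_lt _ hN0⟩ with ha
          set b := y ⟨(N + i.1 - j.1) % N, Nat.mod_lt _ hN0⟩ with hb
          have hsplit : x j * a - y j * b = x j * (a - b) + (x j - y j) * b := by ring
          rw [hsplit]
          have h2 : ‖x j * (a - b) + (x j - y j) * b‖
              ≤ ‖x j‖ * ‖a - b‖ + ‖x j - y j‖ * ‖b‖ := by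
            calc ‖x j * (a - b) + (x j - y j) * b‖
                ≤ ‖x j * (a - b)‖ + ‖(x j - y j) * b‖ := norm_add_le _ _
              _ = ‖x j‖ * ‖a - b‖ + ‖x j - y j‖ * ‖b‖ := by rw [norm_mul, norm_mul]
          have h3 : ‖x j‖ * ‖a - b‖ ≤ R * ‖x - y‖ := by
            apply mul_le_mul (hxj j) (hxy _) (norm_nonneg _) hR
          have h4 : ‖x j - y j‖ * ‖b‖ ≤ ‖x - y‖ * R := by
            apply mul_le_mul (hxy j) (hyj _) (norm_nonneg _) (norm_nonneg _)
          calc ‖x j * (a - b) + (x j - y j) * b‖ ≤ R * ‖x - y‖ + ‖x - y‖ * R := by linarith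
            _ = 2*R*‖x-y‖ := by ring
      _ = N * (2*R*‖x-y‖) := by
          rw [Finset.sum_const, Finset.card_univ, Fintype.card_fin, nsmul_eq_mul]
      _ = 2*N*R*‖x - y‖ := by ring
  exact (pi_norm_le_iff_of_nonneg (by positivity)).2 hbound

lemma unique_aux (T ε c : ℝ) (hT : 0 < T) {N : ℕ} (hN : 2 ≤ N)
    (φ ψ : ℤ → ℝ → ℝ) (hφ : IsPerRiccatiSol T ε c N φ) (hψ : IsPerRiccatiSol T ε c N ψ) :
    ∀ i : ℕ, i < N → ∀ t ∈ Set.Icc (0:ℝ) T, ψ (i : ℤ) t = φ (i : ℤ) t := by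
  have hN0 : 0 < N := by omega
  obtain ⟨hφper, hφode, hφ0, hφ1, hφ2⟩ := hφ
  obtain ⟨hψper, hψode, hψ0, hψ1, hψ2⟩ := hψ
  -- vector-valued solutions
  have hucont : ContinuousOn (fun t => fun i : Fin N => φ (i.1 : ℤ) t) (Set.Icc 0 T) := by
    apply continuousOn_pi.2
    intro i t ht
    exact (hφode i.1 i.2 t ht).continuousWithinAt
  have hvcont : ContinuousOn (fun t => fun i : Fin N => ψ (i.1 : ℤ) t) (Set.Icc 0 T) := by
    apply continuousOn_pi.2
    intro i t ht
    exact (hψode i.1 i.2 t ht).continuousWithinAt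
  obtain ⟨Cu, hCu⟩ := isCompact_Icc.exists_bound_of_continuousOn hucont
  obtain ⟨Cv, hCv⟩ := isCompact_Icc.exists_bound_of_continuousOn hvcont
  set R := max (max Cu Cv) 0 with hR
  have hR0 : (0:ℝ) ≤ R := le_max_right _ _
  set K := Real.toNNReal (2*N*R) with hK
  have hLip : ∀ s : ℝ, LipschitzOnWith K (vecF ε N hN0) (Metric.closedBall (0 : Fin N → ℝ) R) :=
    fun _ => vecF_lipschitz hN0 hR0
  have hderiv : ∀ (θ : ℤ → ℝ → ℝ), (∀ i : ℤ, θ (i + (N : ℤ)) = θ i) →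
      (∀ i : ℕ, i < N → ∀ t ∈ Set.Icc (0:ℝ) T,
        HasDerivWithinAt (θ (i : ℤ))
          ((∑ j ∈ Finset.range N, θ (j : ℤ) t * θ ((N : ℤ) + (i : ℤ) - (j : ℤ)) t) - epsZ ε (i : ℤ))
          (Set.Icc (0:ℝ) T) t) →
      ∀ t ∈ Set.Ioc (0:ℝ) T, HasDerivWithinAt (fun t => fun i : Fin N => θ (i.1 : ℤ) t)
        (vecF ε N hN0 (fun i : Fin N => θ (i.1 : ℤ) t)) (Set.Iic t) t := by
    intro θ hper hode t ht
    have htIcc : t ∈ Set.Icc (0:ℝ) T := ⟨ht.1.le, ht.2⟩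
    apply hasDerivWithinAt_pi.2
    intro i
    have hd := hode i.1 i.2 t htIcc
    have hmem : Set.Icc (0:ℝ) T ∈ nhdsWithin t (Set.Iic t) := by
      apply Filter.mem_of_superset (Filter.inter_mem self_mem_nhdsWithin
        (mem_nhdsWithin_of_mem_nhds (Ioi_mem_nhds ht.1)))
      intro s hs
      exact ⟨le_of_lt hs.2, le_trans hs.1 ht.2⟩
    have hd' := hd.mono_of_mem_nhdsWithin hmem
    rw [vecF_eval hN0 θ hper i t]
    exact hd'
  have humem : ∀ t ∈ Set.Ioc (0:ℝ) T,
      (fun i : Fin N => φ (i.1 : ℤ) t) ∈ Metric.closedBall (0 : Fin N → ℝ) R := by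
    intro t ht
    rw [Metric.mem_closedBall, dist_zero_right]
    exact le_trans (hCu t ⟨ht.1.le, ht.2⟩) (le_trans (le_max_left _ _) (le_max_left _ _))
  have hvmem : ∀ t ∈ Set.Ioc (0:ℝ) T,
      (fun i : Fin N => ψ (i.1 : ℤ) t) ∈ Metric.closedBall (0 : Fin N → ℝ) R := by
    intro t ht
    rw [Metric.mem_closedBall, dist_zero_right]
    exact le_trans (hCv t ⟨ht.1.le, ht.2⟩) (le_trans (le_max_right _ _) (le_max_left _ _))
  have hend : (fun i : Fin N => ψ (i.1 : ℤ) T) = (fun i : Fin N => φ (i.1 : ℤ) T) := by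
    funext i
    by_cases h0 : i.1 = 0
    · simp only [h0, Nat.cast_zero]
      rw [hψ0, hφ0]
    · by_cases h1 : i.1 = 1
      · simp only [h1, Nat.cast_one]
        rw [hψ1, hφ1]
      · rw [hψ2 i.1 (by omega) i.2, hφ2 i.1 (by omega) i.2]
  have heq := ODE_solution_unique_of_mem_Icc_left (v := fun _ x => vecF ε N hN0 x)
    (s := fun _ => Metric.closedBall (0 : Fin N → ℝ) R) (K := K)
    (fun t _ => hLip t) hvcont (hderiv ψ hψper hψode) hvmem hucont (hderiv φ hφper hφode) humem hend
  intro i hi t ht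
  have := heq ht
  exact congrFun this ⟨i, hi⟩


end PerRiccati

/-- For every `N ≥ 2`, `T > 0`, `ε > 0` and `c ≥ 0`, the `N`-periodic Riccati system has a
solution on `[0,T]`, and any two solutions agree on `[0,T]` (in each of the components
`i = 0,…,N-1`, hence, by periodicity, in all components). -/
theorem periodic_riccati_exists_unique
    (T ε c : ℝ) (hT : 0 < T) (hε : 0 < ε) (hc : 0 ≤ c)
    (N : ℕ) (hN : 2 ≤ N) :
    ∃ φ : ℤ → ℝ → ℝ, IsPerRiccatiSol T ε c N φ ∧
      ∀ ψ : ℤ → ℝ → ℝ, IsPerRiccatiSol T ε c N ψ →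
        ∀ i : ℕ, i < N → ∀ t ∈ Set.Icc (0:ℝ) T, ψ (i : ℤ) t = φ (i : ℤ) t := by
  have hN0 : 0 < N := by omega
  have hsol : IsPerRiccatiSol T ε c N (PerRiccati.phiSol T ε c N) := by
    refine ⟨?_, ?_, ?_, ?_, ?_⟩
    · intro i
      exact PerRiccati.phiSol_periodic T ε c hN0 i
    · intro i hi t ht
      exact (PerRiccati.hasDerivAt_phiSol hε hc hN i hi ht.2).hasDerivWithinAt
    · have h := PerRiccati.phiSol_T (T := T) (c := c) hε hN 0 hN0
      rw [show (((0:ℕ)):ℤ) = (0:ℤ) by norm_num] at h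
      simp only [epsZ, if_pos rfl, ↓reduceIte] at h
      rw [h]
      field_simp
    · have h := PerRiccati.phiSol_T (T := T) (c := c) hε hN 1 (by omega)
      rw [show (((1:ℕ)):ℤ) = (1:ℤ) by norm_num] at h
      simp only [epsZ] at h
      norm_num at h
      rw [h]
      field_simp
    · intro i h2 hi
      have h := PerRiccati.phiSol_T (T := T) (c := c) hε hN i hi
      rw [h, epsZ]
      have hne : ((i:ℤ) ≠ 0) ∧ ((i:ℤ) ≠ 1) := by omega
      simp only [hne.1, hne.2, if_false, mul_zero]
  exact ⟨PerRiccati.phiSol T ε c N, hsol,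
    fun ψ hψ => PerRiccati.unique_aux T ε c hT hN _ ψ hsol hψ⟩
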